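/- Let γ>0, ε ∈ (0,1) and let (u_ε,P_ε) be a smooth solution of the viscous short pulse system on the real line. Then for each t>0: ∫_ℝ u_ε(t,x) dx = 0, √ε ‖∂ₓP_ε(t,·)‖_{L∞(ℝ)} ≤ ‖u_ε(t,·)‖_{L²(ℝ)}, and ∫_ℝ u_ε(t,x)P_ε(t,x) dx ≤ ‖u_ε(t,·)‖²_{L²(ℝ)}. -/

import Mathlib

open MeasureTheory Filter Set

/-- The viscous short pulse system on the real line:
`∂ₜu − (1/2)u²∂ₓu = γP + ε∂ₓₓu`, `−ε∂ₓₓP + ∂ₓP = u`, with `P(t,0) = 0`,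
`u(t,·), ∂ₓu(t,·) ∈ L²(ℝ)` and decay of `u, ∂ₓu, P, ∂ₓP` as `x → ±∞`.
The functions `ut, ux, uxx, Px, Pxx` are the indicated partial derivatives. -/
structure ViscousSPELine (γ ε : ℝ) (u P ut ux uxx Px Pxx : ℝ → ℝ → ℝ) : Prop where
  hut : ∀ t x : ℝ, HasDerivAt (fun τ => u τ x) (ut t x) t
  hux : ∀ t x : ℝ, HasDerivAt (fun y => u t y) (ux t x) x
  huxx : ∀ t x : ℝ, HasDerivAt (fun y => ux t y) (uxx t x) x
  hPx : ∀ t x : ℝ, HasDerivAt (fun y => P t y) (Px t x) x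
  hPxx : ∀ t x : ℝ, HasDerivAt (fun y => Px t y) (Pxx t x) x
  hequ : ∀ t > (0:ℝ), ∀ x : ℝ,
    ut t x - 1 / 2 * (u t x) ^ 2 * ux t x = γ * P t x + ε * uxx t x
  heqP : ∀ t > (0:ℝ), ∀ x : ℝ, -ε * Pxx t x + Px t x = u t x
  hbP : ∀ t : ℝ, P t 0 = 0
  huL2 : ∀ t > (0:ℝ), MeasureTheory.Integrable (fun x => (u t x) ^ 2)
  huxL2 : ∀ t > (0:ℝ), MeasureTheory.Integrable (fun x => (ux t x) ^ 2)
  hdu_top : ∀ t > (0:ℝ), Filter.Tendsto (fun x => u t x) Filter.atTop (nhds 0)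
  hdu_bot : ∀ t > (0:ℝ), Filter.Tendsto (fun x => u t x) Filter.atBot (nhds 0)
  hdux_top : ∀ t > (0:ℝ), Filter.Tendsto (fun x => ux t x) Filter.atTop (nhds 0)
  hdux_bot : ∀ t > (0:ℝ), Filter.Tendsto (fun x => ux t x) Filter.atBot (nhds 0)
  hdP_top : ∀ t > (0:ℝ), Filter.Tendsto (fun x => P t x) Filter.atTop (nhds 0)
  hdP_bot : ∀ t > (0:ℝ), Filter.Tendsto (fun x => P t x) Filter.atBot (nhds 0)
  hdPx_top : ∀ t > (0:ℝ), Filter.Tendsto (fun x => Px t x) Filter.atTop (nhds 0)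
  hdPx_bot : ∀ t > (0:ℝ), Filter.Tendsto (fun x => Px t x) Filter.atBot (nhds 0)

/-- For each `t > 0`: `∫_ℝ u_ε(t,x) dx = 0` (as the limit of
`∫_{-X}^X u_ε(t,x) dx`), `√ε ‖∂ₓP_ε(t,·)‖_{L∞(ℝ)} ≤ ‖u_ε(t,·)‖_{L²(ℝ)}`
(stated pointwise), and `∫_ℝ u_ε P_ε dx ≤ ‖u_ε(t,·)‖²_{L²(ℝ)}`. -/
theorem viscous_SPE_realline_basic
    (γ ε : ℝ) (hγ : 0 < γ) (hε : ε ∈ Set.Ioo (0:ℝ) 1)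
    (u P ut ux uxx Px Pxx : ℝ → ℝ → ℝ)
    (h : ViscousSPELine γ ε u P ut ux uxx Px Pxx) :
    ∀ t > (0:ℝ),
      Tendsto (fun X : ℝ => ∫ x in (-X)..X, u t x) atTop (nhds 0) ∧
      (∀ x : ℝ, Real.sqrt ε * |Px t x| ≤ Real.sqrt (∫ y : ℝ, (u t y) ^ 2)) ∧
      (∫ x : ℝ, u t x * P t x) ≤ ∫ x : ℝ, (u t x) ^ 2 := by
  obtain ⟨hε0, hε1⟩ := hε
  intro t ht
  -- continuity facts
  have hu_c : Continuous (u t) := by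
    have : Differentiable ℝ (u t) := fun x => (h.hux t x).differentiableAt
    exact this.continuous
  have hP_c : Continuous (P t) := by
    have : Differentiable ℝ (P t) := fun x => (h.hPx t x).differentiableAt
    exact this.continuous
  have hPx_c : Continuous (Px t) := by
    have : Differentiable ℝ (Px t) := fun x => (h.hPxx t x).differentiableAt
    exact this.continuous
  have heP : ∀ x : ℝ, ε * Pxx t x = Px t x - u t x := by
    intro x; have := h.heqP t ht x; linarith
  have hu2 : Integrable (fun x => (u t x) ^ 2) := h.huL2 t ht
  set M : ℝ := ∫ y : ℝ, (u t y) ^ 2 with hM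
  have hM0 : 0 ≤ M := integral_nonneg fun y => sq_nonneg _
  have hnegtop : Tendsto (fun X : ℝ => -X) atTop atBot := tendsto_neg_atTop_atBot
  -- Part 1
  have part1 : Tendsto (fun X : ℝ => ∫ x in (-X)..X, u t x) atTop (nhds 0) := by
    have hQ : ∀ x : ℝ, HasDerivAt (fun y => P t y - ε * Px t y) (u t x) x := by
      intro x
      have h1 := (h.hPx t x).sub ((h.hPxx t x).const_mul ε)
      have e : Px t x - ε * Pxx t x = u t x := by have := heP x; linarith
      rwa [e] at h1
    have hint : ∀ X : ℝ, (∫ x in (-X)..X, u t x)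
        = (P t X - ε * Px t X) - (P t (-X) - ε * Px t (-X)) := fun X =>
      intervalIntegral.integral_eq_sub_of_hasDerivAt (fun x _ => hQ x)
        (hu_c.intervalIntegrable _ _)
    have hT : Tendsto
        (fun X : ℝ => (P t X - ε * Px t X) - (P t (-X) - ε * Px t (-X))) atTop (nhds 0) := by
      have h1 := (h.hdP_top t ht).sub ((h.hdPx_top t ht).const_mul ε)
      have h2 := ((h.hdP_bot t ht).comp hnegtop).sub
        (((h.hdPx_bot t ht).comp hnegtop).const_mul ε)
      simpa using h1.sub h2
    exact hT.congr fun X => (hint X).symm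
  -- derivative of F = ε * Px^2
  have hF : ∀ x : ℝ, HasDerivAt (fun y => ε * (Px t y) ^ 2)
      (2 * Px t x * (Px t x - u t x)) x := by
    intro x
    have h1 : HasDerivAt (fun y => ε * (Px t y) ^ 2) _ x := ((h.hPxx t x).pow 2).const_mul ε
    convert h1 using 1
    push_cast
    linear_combination (-2 * Px t x) * heP x
  have hf'_c : Continuous (fun y => 2 * Px t y * (Px t y - u t y)) :=
    (continuous_const.mul hPx_c).mul (hPx_c.sub hu_c)
  -- Part 2
  have key2 : ∀ x : ℝ, ε * (Px t x) ^ 2 ≤ M := by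
    intro x
    have hbound : ∀ X : ℝ, x ≤ X → ε * (Px t x) ^ 2 ≤ ε * (Px t X) ^ 2 + M := by
      intro X hxX
      have hftc : (∫ y in x..X, 2 * Px t y * (Px t y - u t y))
          = ε * (Px t X) ^ 2 - ε * (Px t x) ^ 2 :=
        intervalIntegral.integral_eq_sub_of_hasDerivAt (fun y _ => hF y)
          (hf'_c.intervalIntegrable _ _)
      have hmono : (∫ y in x..X, -(u t y) ^ 2)
          ≤ ∫ y in x..X, 2 * Px t y * (Px t y - u t y) := by
        apply intervalIntegral.integral_mono_on hxX
          (hu2.neg.intervalIntegrable) (hf'_c.intervalIntegrable _ _)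
        intro y _
        simp only [Pi.neg_apply]
        nlinarith [sq_nonneg (Px t y - u t y), sq_nonneg (Px t y)]
      have hIoc : (∫ y in x..X, (u t y) ^ 2) ≤ M := by
        rw [intervalIntegral.integral_of_le hxX]
        exact setIntegral_le_integral hu2 (Eventually.of_forall fun y => sq_nonneg _)
      have hne : (∫ y in x..X, -(u t y) ^ 2) = -(∫ y in x..X, (u t y) ^ 2) := by
        simp [intervalIntegral.integral_neg]
      rw [hftc] at hmono
      rw [hne] at hmono
      linarith
    have hT : Tendsto (fun X : ℝ => ε * (Px t X) ^ 2 + M) atTop (nhds M) := by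
      have := ((h.hdPx_top t ht).pow 2).const_mul ε
      simpa using this.add_const M
    exact ge_of_tendsto hT ((eventually_ge_atTop x).mono fun X hX => hbound X hX)
  have part2 : ∀ x : ℝ, Real.sqrt ε * |Px t x| ≤ Real.sqrt M := by
    intro x
    have := Real.sqrt_le_sqrt (key2 x)
    rwa [Real.sqrt_mul hε0.le, Real.sqrt_sq_eq_abs] at this
  refine ⟨part1, part2, ?_⟩
  -- Part 3
  have hFb : ∀ X : ℝ, 0 ≤ X → (∫ y in (-X)..X, (Px t y) ^ 2)
      ≤ (ε * (Px t X) ^ 2 - ε * (Px t (-X)) ^ 2) + M := by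
    intro X hX0
    have hXX : -X ≤ X := by linarith
    have hftc : (∫ y in (-X)..X, 2 * Px t y * (Px t y - u t y))
        = ε * (Px t X) ^ 2 - ε * (Px t (-X)) ^ 2 :=
      intervalIntegral.integral_eq_sub_of_hasDerivAt (fun y _ => hF y)
        (hf'_c.intervalIntegrable _ _)
    have hmono : (∫ y in (-X)..X, (Px t y) ^ 2)
        ≤ ∫ y in (-X)..X, (2 * Px t y * (Px t y - u t y) + (u t y) ^ 2) := by
      apply intervalIntegral.integral_mono_on hXX
        ((hPx_c.pow 2).intervalIntegrable _ _)
        ((hf'_c.intervalIntegrable _ _).add (hu2.intervalIntegrable))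
      intro y _
      simp only [Pi.pow_apply]
      nlinarith [sq_nonneg (Px t y - u t y)]
    have hsplit : (∫ y in (-X)..X, (2 * Px t y * (Px t y - u t y) + (u t y) ^ 2))
        = (∫ y in (-X)..X, 2 * Px t y * (Px t y - u t y)) + ∫ y in (-X)..X, (u t y) ^ 2 :=
      intervalIntegral.integral_add (hf'_c.intervalIntegrable _ _) (hu2.intervalIntegrable)
    have hIoc : (∫ y in (-X)..X, (u t y) ^ 2) ≤ M := by
      rw [intervalIntegral.integral_of_le hXX]
      exact setIntegral_le_integral hu2 (Eventually.of_forall fun y => sq_nonneg _)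
    rw [hsplit, hftc] at hmono
    linarith
  have hPx2i : Integrable (fun x => (Px t x) ^ 2) := by
    apply MeasureTheory.integrable_of_intervalIntegral_norm_bounded (μ := volume)
      (a := fun X : ℝ => -X) (b := fun X : ℝ => X) (l := atTop) (2 * M)
      (fun X => (hPx_c.pow 2).integrableOn_Ioc) hnegtop tendsto_id
    filter_upwards [eventually_ge_atTop (0 : ℝ)] with X hX0
    have hnorm : (∫ y in (-X)..X, ‖(Px t y) ^ 2‖) = ∫ y in (-X)..X, (Px t y) ^ 2 := by
      apply intervalIntegral.integral_congr
      intro y _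
      exact abs_of_nonneg (sq_nonneg _)
    simp only [Pi.pow_apply]
    rw [hnorm]
    have h1 := key2 X
    have h2 : 0 ≤ ε * (Px t (-X)) ^ 2 := by positivity
    have := hFb X hX0
    linarith
  have hPx2M : (∫ y : ℝ, (Px t y) ^ 2) ≤ M := by
    have hLHS : Tendsto (fun X : ℝ => ∫ y in (-X)..X, (Px t y) ^ 2) atTop
        (nhds (∫ y : ℝ, (Px t y) ^ 2)) :=
      MeasureTheory.intervalIntegral_tendsto_integral hPx2i hnegtop tendsto_id
    have hRHS : Tendsto (fun X : ℝ => (ε * (Px t X) ^ 2 - ε * (Px t (-X)) ^ 2) + M)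
        atTop (nhds M) := by
      have h1 := ((h.hdPx_top t ht).pow 2).const_mul ε
      have h2 := (((h.hdPx_bot t ht).comp hnegtop).pow 2).const_mul ε
      simpa using (h1.sub h2).add_const M
    refine le_of_tendsto_of_tendsto hLHS hRHS ?_
    filter_upwards [eventually_ge_atTop (0 : ℝ)] with X hX0
    exact hFb X hX0
  by_cases hiUP : Integrable (fun x => u t x * P t x)
  · -- FTC identity for G = P^2/2 - ε * (Px * P)
    have hG : ∀ x : ℝ, HasDerivAt (fun y => (P t y) ^ 2 / 2 - ε * (Px t y * P t y))
        (u t x * P t x - ε * (Px t x) ^ 2) x := by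
      intro x
      have h1 : HasDerivAt (fun y => (P t y) ^ 2 / 2 - ε * (Px t y * P t y)) _ x :=
        (((h.hPx t x).pow 2).div_const 2).sub
        (((h.hPxx t x).mul (h.hPx t x)).const_mul ε)
      convert h1 using 1
      push_cast
      linear_combination (P t x) * heP x
    have hval : ∀ X : ℝ, (∫ x in (-X)..X, u t x * P t x)
        = (((P t X) ^ 2 / 2 - ε * (Px t X * P t X))
          - ((P t (-X)) ^ 2 / 2 - ε * (Px t (-X) * P t (-X))))
          + ε * ∫ x in (-X)..X, (Px t x) ^ 2 := by
      intro X
      have hftc : (∫ x in (-X)..X, (u t x * P t x - ε * (Px t x) ^ 2))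
          = ((P t X) ^ 2 / 2 - ε * (Px t X * P t X))
          - ((P t (-X)) ^ 2 / 2 - ε * (Px t (-X) * P t (-X))) :=
        intervalIntegral.integral_eq_sub_of_hasDerivAt (fun x _ => hG x)
          ((hiUP.intervalIntegrable).sub ((hPx2i.const_mul ε).intervalIntegrable))
      have hsplit : (∫ x in (-X)..X, (u t x * P t x - ε * (Px t x) ^ 2))
          = (∫ x in (-X)..X, u t x * P t x) - ε * ∫ x in (-X)..X, (Px t x) ^ 2 := by
        rw [intervalIntegral.integral_sub (hiUP.intervalIntegrable)
          ((hPx2i.const_mul ε).intervalIntegrable), intervalIntegral.integral_const_mul]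
      rw [hsplit] at hftc
      linarith
    have hLHS : Tendsto (fun X : ℝ => ∫ x in (-X)..X, u t x * P t x) atTop
        (nhds (∫ x : ℝ, u t x * P t x)) :=
      MeasureTheory.intervalIntegral_tendsto_integral hiUP hnegtop tendsto_id
    have hRHS : Tendsto (fun X : ℝ =>
        (((P t X) ^ 2 / 2 - ε * (Px t X * P t X))
          - ((P t (-X)) ^ 2 / 2 - ε * (Px t (-X) * P t (-X))))
          + ε * ∫ x in (-X)..X, (Px t x) ^ 2) atTop
        (nhds (ε * ∫ y : ℝ, (Px t y) ^ 2)) := by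
      have hPt := h.hdP_top t ht
      have hPb := (h.hdP_bot t ht).comp hnegtop
      have hPxt := h.hdPx_top t ht
      have hPxb := (h.hdPx_bot t ht).comp hnegtop
      have hB : Tendsto (fun X : ℝ =>
          ((P t X) ^ 2 / 2 - ε * (Px t X * P t X))
          - ((P t (-X)) ^ 2 / 2 - ε * (Px t (-X) * P t (-X)))) atTop (nhds 0) := by
        have h1 := ((hPt.pow 2).div_const 2).sub ((hPxt.mul hPt).const_mul ε)
        have h2 := ((hPb.pow 2).div_const 2).sub ((hPxb.mul hPb).const_mul ε)
        simpa using h1.sub h2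
      have hI : Tendsto (fun X : ℝ => ε * ∫ x in (-X)..X, (Px t x) ^ 2) atTop
          (nhds (ε * ∫ y : ℝ, (Px t y) ^ 2)) :=
        (MeasureTheory.intervalIntegral_tendsto_integral hPx2i hnegtop tendsto_id).const_mul ε
      simpa using hB.add hI
    have heq : (∫ x : ℝ, u t x * P t x) = ε * ∫ y : ℝ, (Px t y) ^ 2 :=
      tendsto_nhds_unique hLHS ((hRHS.congr fun X => (hval X).symm))
    rw [heq]
    have h0 : 0 ≤ ∫ y : ℝ, (Px t y) ^ 2 := integral_nonneg fun y => sq_nonneg _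
    nlinarith
  · rw [integral_undef hiUP]
    exact hM0
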